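/- Let z = (L, ξ) with L > 0, where ξ ∈ W^{1,∞}(]0,1[, ℝ²), and suppose there exist u ∈ ℝ² and c > 0 with ξ_τ(τ)ᵀ u ≥ c for almost all τ. Then the linear map h'(z) : ℝ × W^{1,∞}₀(]0,1[,ℝ²) → L^∞(]0,1[) given by h'(z)[δL, δξ] = 2 ξ_τᵀ δξ_τ − 2 L δL is surjective. -/

import Mathlib

open MeasureTheory
open scoped RealInnerProductSpace

/-- Surjectivity of the constraint derivative: if `L > 0` and `ξ_τᵀu ≥ c > 0` a.e.
(with `ξ_τ` essentially bounded), then for every `f ∈ L^∞(]0,1[)` there exist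
`δL ∈ ℝ` and an essentially bounded `δξ_τ` with `∫₀¹ δξ_τ = 0`
(i.e. `δξ ∈ W^{1,∞}₀`) such that `2 ξ_τᵀ δξ_τ − 2 L δL = f` a.e. -/
theorem constraint_derivative_surjective
    (ξτ : ℝ → EuclideanSpace ℝ (Fin 2)) (L : ℝ) (hL : 0 < L)
    (hξτmeas : AEMeasurable ξτ (volume.restrict (Set.Ioo (0:ℝ) 1)))
    (Cξ : ℝ) (hξτbdd : ∀ᵐ τ ∂(volume.restrict (Set.Ioo (0:ℝ) 1)), ‖ξτ τ‖ ≤ Cξ)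
    (u : EuclideanSpace ℝ (Fin 2)) (c : ℝ) (hc : 0 < c)
    (hb : ∀ᵐ τ ∂(volume.restrict (Set.Ioo (0:ℝ) 1)), c ≤ ⟪ξτ τ, u⟫)
    (f : ℝ → ℝ)
    (hfmeas : AEMeasurable f (volume.restrict (Set.Ioo (0:ℝ) 1)))
    (Cf : ℝ) (hfbdd : ∀ᵐ τ ∂(volume.restrict (Set.Ioo (0:ℝ) 1)), |f τ| ≤ Cf) :
    ∃ (δL : ℝ) (δξτ : ℝ → EuclideanSpace ℝ (Fin 2)),
      AEMeasurable δξτ (volume.restrict (Set.Ioo (0:ℝ) 1)) ∧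
      (∃ C : ℝ, ∀ᵐ τ ∂(volume.restrict (Set.Ioo (0:ℝ) 1)), ‖δξτ τ‖ ≤ C) ∧
      (∫ τ in Set.Ioo (0:ℝ) 1, δξτ τ) = 0 ∧
      ∀ᵐ τ ∂(volume.restrict (Set.Ioo (0:ℝ) 1)),
        2 * ⟪ξτ τ, δξτ τ⟫ - 2 * L * δL = f τ := by
  set μ := volume.restrict (Set.Ioo (0:ℝ) 1) with hμdef
  have hμuniv : μ Set.univ = 1 := by
    rw [hμdef, Measure.restrict_apply_univ]
    simp [Real.volume_Ioo]
  haveI : IsFiniteMeasure μ := ⟨by rw [hμuniv]; exact ENNReal.one_lt_top⟩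
  have hμne : μ ≠ 0 := by
    intro h; rw [h] at hμuniv; simp at hμuniv
  haveI : (MeasureTheory.ae μ).NeBot := ae_neBot.2 hμne
  set b : ℝ → ℝ := fun τ => ⟪ξτ τ, u⟫ with hbdef
  have hbmeas : AEMeasurable b μ := hξτmeas.inner aemeasurable_const
  have hbub : ∀ᵐ τ ∂μ, b τ ≤ Cξ * ‖u‖ := by
    filter_upwards [hξτbdd] with τ h
    calc b τ ≤ ‖ξτ τ‖ * ‖u‖ := real_inner_le_norm _ _
    _ ≤ Cξ * ‖u‖ := by gcongr
  have hcC : c ≤ Cξ * ‖u‖ := by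
    obtain ⟨τ, h1, h2⟩ := (hb.and hbub).exists
    linarith
  have hCf0 : 0 ≤ Cf := by
    obtain ⟨τ, h1⟩ := hfbdd.exists
    exact le_trans (abs_nonneg _) h1
  set ε : ℝ := (2 * (Cξ * ‖u‖))⁻¹ with hεdef
  have hε : 0 < ε := by
    have : 0 < Cξ * ‖u‖ := lt_of_lt_of_le hc hcC
    rw [hεdef]; positivity
  set a : ℝ → ℝ := fun τ => (2 * b τ)⁻¹ with hadef
  have hameas : AEMeasurable a μ := (hbmeas.const_mul 2).inv
  have habounds : ∀ᵐ τ ∂μ, ε ≤ a τ ∧ a τ ≤ (2 * c)⁻¹ := by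
    filter_upwards [hb, hbub] with τ h1 h2
    have hb1 : 0 < b τ := lt_of_lt_of_le hc h1
    constructor
    · exact inv_anti₀ (by linarith) (by linarith)
    · exact inv_anti₀ (by linarith) (by linarith)
  have ha_int : Integrable a μ := by
    refine (integrable_const ((2*c)⁻¹)).mono' hameas.aestronglyMeasurable ?_
    filter_upwards [habounds] with τ ⟨h1, h2⟩
    rw [Real.norm_eq_abs, abs_of_pos (lt_of_lt_of_le hε h1)]
    exact h2
  have hfa_int : Integrable (fun τ => f τ * a τ) μ := by
    refine (integrable_const (Cf * (2*c)⁻¹)).mono'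
      (hfmeas.mul hameas).aestronglyMeasurable ?_
    filter_upwards [habounds, hfbdd] with τ ⟨h1, h2⟩ h3
    rw [Real.norm_eq_abs, abs_mul, abs_of_pos (lt_of_lt_of_le hε h1)]
    exact mul_le_mul h3 h2 (le_of_lt (lt_of_lt_of_le hε h1)) hCf0
  set J : ℝ := ∫ τ, a τ ∂μ with hJdef
  have hJ : ε ≤ J := by
    have := integral_mono_ae (integrable_const ε) ha_int
      (by filter_upwards [habounds] with τ h; exact h.1)
    rwa [integral_const, measureReal_def, hμuniv, ENNReal.toReal_one, one_smul] at this
  have hJpos : 0 < J := lt_of_lt_of_le hε hJ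
  set I : ℝ := ∫ τ, f τ * a τ ∂μ with hIdef
  set δL : ℝ := -I / (2 * L * J) with hδLdef
  set φ : ℝ → ℝ := fun τ => (f τ + 2 * L * δL) * a τ with hφdef
  have hφeq : φ = fun τ => f τ * a τ + (2 * L * δL) * a τ := by
    funext τ; rw [hφdef]; ring
  have hφint : Integrable φ μ := by
    rw [hφeq]; exact hfa_int.add (ha_int.const_mul _)
  have hφ0 : ∫ τ, φ τ ∂μ = 0 := by
    rw [hφeq, integral_add hfa_int (ha_int.const_mul _), integral_const_mul,
      ← hIdef, ← hJdef, hδLdef]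
    field_simp
    ring
  refine ⟨δL, fun τ => φ τ • u, ?_, ?_, ?_, ?_⟩
  · exact ((hfmeas.add aemeasurable_const).mul hameas).smul aemeasurable_const
  · refine ⟨(Cf + 2 * L * |δL|) * (2*c)⁻¹ * ‖u‖, ?_⟩
    filter_upwards [habounds, hfbdd] with τ ⟨h1, h2⟩ h3
    rw [norm_smul, Real.norm_eq_abs]
    gcongr
    rw [hφdef, abs_mul, abs_of_pos (lt_of_lt_of_le hε h1)]
    have h4 : |f τ + 2 * L * δL| ≤ Cf + 2 * L * |δL| := by
      calc |f τ + 2 * L * δL| ≤ |f τ| + |2 * L * δL| := abs_add_le _ _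
      _ ≤ Cf + 2 * L * |δL| := by
          rw [abs_mul, abs_of_pos (by linarith : (0:ℝ) < 2 * L)]
          linarith
    exact mul_le_mul h4 h2 (le_of_lt (lt_of_lt_of_le hε h1))
      (by positivity)
  · rw [show (∫ τ in Set.Ioo (0:ℝ) 1, φ τ • u) = ∫ τ, φ τ • u ∂μ from rfl,
      integral_smul_const, hφ0, zero_smul]
  · filter_upwards [hb] with τ h1
    have hbne : b τ ≠ 0 := ne_of_gt (lt_of_lt_of_le hc h1)
    rw [real_inner_smul_right]
    show 2 * ((f τ + 2 * L * δL) * (2 * b τ)⁻¹ * b τ) - 2 * L * δL = f τ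
    field_simp
    ring
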